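/- For any pure unit quaternions A and B there exist a unit quaternion g and a unique γ ∈ [0, π] such that g·A·g⁻¹ = i and g·B·g⁻¹ = e^{γk}·i. (This identifies the traceless character variety R(B³, A₁ ∪ A₂) of two unknotted arcs in a 3-ball — whose tangle complement has free fundamental group on the two meridians — with the arc [0, π], embedding in the pillowcase as the diagonal arc θ = γ.) -/

import Mathlib

open Quaternion

noncomputable section

/-- The quaternion `i`. -/
def qi : ℍ[ℝ] := ⟨0, 1, 0, 0⟩

/-- The quaternion `k`. -/
def qk : ℍ[ℝ] := ⟨0, 0, 0, 1⟩

/-- The quaternionic exponential `e^{tQ} = cos t + (sin t) • Q` for a pure unit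
quaternion `Q`. -/
def expQ (t : ℝ) (Q : ℍ[ℝ]) : ℍ[ℝ] := ((Real.cos t : ℝ) : ℍ[ℝ]) + (Real.sin t) • Q

def qmk (a b c d : ℝ) : ℍ[ℝ] := ⟨a, b, c, d⟩

@[simp] lemma qmk_re (a b c d : ℝ) : (qmk a b c d).re = a := rfl
@[simp] lemma qmk_imI (a b c d : ℝ) : (qmk a b c d).imI = b := rfl
@[simp] lemma qmk_imJ (a b c d : ℝ) : (qmk a b c d).imJ = c := rfl
@[simp] lemma qmk_imK (a b c d : ℝ) : (qmk a b c d).imK = d := rfl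
@[simp] lemma qaux_qi_re : qi.re = 0 := rfl
@[simp] lemma qaux_qi_imI : qi.imI = 1 := rfl
@[simp] lemma qaux_qi_imJ : qi.imJ = 0 := rfl
@[simp] lemma qaux_qi_imK : qi.imK = 0 := rfl
@[simp] lemma qaux_qk_re : qk.re = 0 := rfl
@[simp] lemma qaux_qk_imI : qk.imI = 0 := rfl
@[simp] lemma qaux_qk_imJ : qk.imJ = 0 := rfl
@[simp] lemma qaux_qk_imK : qk.imK = 1 := rfl

lemma qaux_normSq_one {q : ℍ[ℝ]} (h : ‖q‖ = 1) : normSq q = 1 := by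
  rw [normSq_eq_norm_mul_self, h]; norm_num

lemma qaux_norm_one {q : ℍ[ℝ]} (h : normSq q = 1) : ‖q‖ = 1 := by
  have h2 := normSq_eq_norm_mul_self q
  nlinarith [norm_nonneg q]

lemma qaux_inv_eq_star {g : ℍ[ℝ]} (h : ‖g‖ = 1) : g⁻¹ = star g := by
  rw [Quaternion.inv_def, qaux_normSq_one h]
  simp

lemma qaux_pure_sq {A : ℍ[ℝ]} (hn : ‖A‖ = 1) (hr : A.re = 0) : A * A = -1 := by
  have h1 := (Quaternion.sq_eq_neg_normSq (a := A)).mpr hr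
  rw [qaux_normSq_one hn] at h1
  rw [← sq, h1]; norm_num

lemma qaux_re_mul_comm (a b : ℍ[ℝ]) : (a * b).re = (b * a).re := by
  simp only [Quaternion.re_mul]; ring

lemma qaux_re_conj {g : ℍ[ℝ]} (hg : g ≠ 0) (x : ℍ[ℝ]) : (g * x * g⁻¹).re = x.re := by
  rw [qaux_re_mul_comm, ← mul_assoc, inv_mul_cancel₀ hg, one_mul]

lemma qaux_conj_mul {g : ℍ[ℝ]} (hg : g ≠ 0) (x y : ℍ[ℝ]) :
    (g * x * g⁻¹) * (g * y * g⁻¹) = g * (x * y) * g⁻¹ := by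
  have h : g⁻¹ * g = 1 := inv_mul_cancel₀ hg
  calc g * x * g⁻¹ * (g * y * g⁻¹)
      = g * (x * ((g⁻¹ * g) * (y * g⁻¹))) := by simp only [mul_assoc]
    _ = g * (x * y) * g⁻¹ := by rw [h, one_mul]; simp only [mul_assoc]

lemma qaux_conj_eq {g A q : ℍ[ℝ]} (hg : g ≠ 0) (h : g * A = q * g) : g * A * g⁻¹ = q := by
  rw [h, mul_assoc, mul_inv_cancel₀ hg, mul_one]

/-- Conjugate any pure unit quaternion to `i`. -/
lemma qaux_conj_to_i {A : ℍ[ℝ]} (hn : ‖A‖ = 1) (hr : A.re = 0) :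
    ∃ g : ℍ[ℝ], ‖g‖ = 1 ∧ g * A * g⁻¹ = qi := by
  have hii : qi * qi = -1 := by
    ext <;> simp [Quaternion.re_mul, Quaternion.imI_mul, Quaternion.imJ_mul,
      Quaternion.imK_mul]
  by_cases hA : A = -qi
  · refine ⟨qmk 0 0 1 0, ?_, ?_⟩
    · apply qaux_norm_one; rw [normSq_def']; norm_num
    · apply qaux_conj_eq
      · intro h
        have := congrArg QuaternionAlgebra.imJ h
        simp [Quaternion.ext_iff] at this
      · subst hA
        ext <;> simp [Quaternion.re_mul, Quaternion.imI_mul, Quaternion.imJ_mul,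
          Quaternion.imK_mul]
  · have hne : qi + A ≠ 0 := by
      intro h
      apply hA
      exact eq_neg_of_add_eq_zero_right h
    have hnorm : ‖qi + A‖ ≠ 0 := norm_ne_zero_iff.mpr hne
    refine ⟨‖qi + A‖⁻¹ • (qi + A), ?_, ?_⟩
    · rw [norm_smul, norm_inv, norm_norm, inv_mul_cancel₀ hnorm]
    · apply qaux_conj_eq (smul_ne_zero (inv_ne_zero hnorm) hne)
      have key : (qi + A) * A = qi * (qi + A) := by
        rw [add_mul, mul_add, qaux_pure_sq hn hr, hii]
        abel
      rw [smul_mul_assoc, mul_smul_comm, key]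

/-- Rotate the `j,k`-part of a pure quaternion onto the positive `j`-axis,
using a unit quaternion commuting with `i`. -/
lemma qaux_rotate_jk (B : ℍ[ℝ]) (hr : B.re = 0) :
    ∃ w : ℍ[ℝ], ‖w‖ = 1 ∧ w * qi = qi * w ∧
      w * B * w⁻¹ = ⟨0, B.imI, Real.sqrt (B.imJ ^ 2 + B.imK ^ 2), 0⟩ := by
  set b1 := B.imI
  set b2 := B.imJ
  set b3 := B.imK
  by_cases hb : b2 = 0 ∧ b3 = 0
  · have h2 : B.imJ = 0 := hb.1
    have h3 : B.imK = 0 := hb.2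
    refine ⟨1, by simp, by simp, ?_⟩
    rw [inv_one, mul_one, one_mul]
    ext <;> simp [hb.1, hb.2, h2, h3, hr, b1]
  · set z : ℂ := ⟨b2, b3⟩ with hz
    have hz0 : z ≠ 0 := by
      intro h
      exact hb ⟨congrArg Complex.re h, congrArg Complex.im h⟩
    set r : ℝ := Real.sqrt (b2 ^ 2 + b3 ^ 2) with hrdef
    have habs : ‖z‖ = r := by
      rw [Complex.norm_def, Complex.normSq_apply, hrdef]
      simp only [hz]
      ring_nf
    have hrpos : 0 < r := by
      rw [← habs]
      exact (norm_pos_iff.mpr hz0)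
    set θ := Complex.arg z with hθ
    set c := Real.cos (θ / 2) with hc
    set s := -Real.sin (θ / 2) with hs
    have hcs : c ^ 2 + s ^ 2 = 1 := by
      rw [hc, hs]; ring_nf; exact Real.cos_sq_add_sin_sq _
    have hcosθ : Real.cos θ = b2 / r := by
      rw [hθ, Complex.cos_arg hz0, habs]
    have hsinθ : Real.sin θ = b3 / r := by
      rw [hθ, Complex.sin_arg, habs]
    have h2 : b2 = r * (c ^ 2 - s ^ 2) := by
      have hct : Real.cos θ = c ^ 2 - s ^ 2 := by
        have h := Real.cos_two_mul (θ / 2)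
        rw [show 2 * (θ / 2) = θ by ring] at h
        rw [hc, hs]
        nlinarith [Real.sin_sq_add_cos_sq (θ / 2)]
      rw [← hct, hcosθ]
      field_simp
    have h3 : b3 = r * (-(2 * c * s)) := by
      have hst : Real.sin θ = -(2 * c * s) := by
        have h := Real.sin_two_mul (θ / 2)
        rw [show 2 * (θ / 2) = θ by ring] at h
        rw [hc, hs]
        linarith [h]
      rw [← hst, hsinθ]
      field_simp
    set w : ℍ[ℝ] := qmk c s 0 0 with hw
    have hwn : ‖w‖ = 1 := by
      apply qaux_norm_one
      rw [normSq_def', hw]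
      simpa using hcs
    refine ⟨w, hwn, ?_, ?_⟩
    · ext <;> simp [hw, Quaternion.re_mul, Quaternion.imI_mul, Quaternion.imJ_mul,
        Quaternion.imK_mul]
    · rw [qaux_inv_eq_star hwn]
      ext <;>
        simp only [hw, Quaternion.re_mul, Quaternion.imI_mul, Quaternion.imJ_mul,
          Quaternion.imK_mul, Quaternion.re_star, Quaternion.imI_star, Quaternion.imJ_star,
          Quaternion.imK_star, qmk_re, qmk_imI, qmk_imJ, qmk_imK, hr]
      · ring
      · linear_combination b1 * hcs
      · linear_combination (c ^ 2 - s ^ 2) * h2 - (2 * c * s) * h3 + (r * (c ^ 2 + s ^ 2 + 1)) * hcs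
      · linear_combination (2 * c * s) * h2 + (c ^ 2 - s ^ 2) * h3
/-- `e^{γ k} i = cos γ · i + sin γ · j`. -/
lemma qaux_expQ_qk_mul_qi (γ : ℝ) :
    expQ γ qk * qi = ⟨0, Real.cos γ, Real.sin γ, 0⟩ := by
  ext <;> simp [expQ, Quaternion.re_mul, Quaternion.imI_mul, Quaternion.imJ_mul,
    Quaternion.imK_mul]

/-- The angle is determined by `Re (A·B)`. -/
lemma qaux_cos_det {A B : ℍ[ℝ]} {g : ℍ[ℝ]} {γ : ℝ} (hg : ‖g‖ = 1)
    (hA : g * A * g⁻¹ = qi) (hB : g * B * g⁻¹ = expQ γ qk * qi) :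
    Real.cos γ = -((A * B).re) := by
  have hg0 : g ≠ 0 := by
    intro h; rw [h, norm_zero] at hg; norm_num at hg
  have key : qi * (expQ γ qk * qi) = g * (A * B) * g⁻¹ := by
    rw [← hB, ← hA, qaux_conj_mul hg0]
  have h1 := congrArg QuaternionAlgebra.re key
  rw [qaux_re_conj hg0] at h1
  have hre : (qi * (expQ γ qk * qi)).re = -Real.cos γ := by
    rw [qaux_expQ_qk_mul_qi]
    show (qi * qmk 0 (Real.cos γ) (Real.sin γ) 0).re = _
    simp [Quaternion.re_mul]
  rw [hre] at h1
  linarith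

/-- Any pair `(A,B)` of pure unit quaternions is conjugate to `(i, e^{γk}i)` for a
unique `γ ∈ [0,π]`; this identifies the traceless character variety of the trivial
two-stranded tangle in a 3-ball with the arc `[0,π]`. -/
theorem pair_normal_form_unique_angle (A B : ℍ[ℝ])
    (hAnorm : ‖A‖ = 1) (hAre : A.re = 0)
    (hBnorm : ‖B‖ = 1) (hBre : B.re = 0) :
    ∃ g : ℍ[ℝ], ∃ γ : ℝ, ‖g‖ = 1 ∧ γ ∈ Set.Icc 0 Real.pi ∧
      g * A * g⁻¹ = qi ∧ g * B * g⁻¹ = expQ γ qk * qi ∧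
      ∀ g' : ℍ[ℝ], ∀ γ' : ℝ, ‖g'‖ = 1 → γ' ∈ Set.Icc 0 Real.pi →
        g' * A * g'⁻¹ = qi → g' * B * g'⁻¹ = expQ γ' qk * qi → γ' = γ := by
  obtain ⟨g1, hg1n, hg1A⟩ := qaux_conj_to_i hAnorm hAre
  have hg10 : g1 ≠ 0 := by
    intro h; rw [h, norm_zero] at hg1n; norm_num at hg1n
  set B' := g1 * B * g1⁻¹ with hB'
  have hB'n : ‖B'‖ = 1 := by
    rw [hB', norm_mul, norm_mul, norm_inv, hg1n, hBnorm]; norm_num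
  have hB're : B'.re = 0 := by rw [hB', qaux_re_conj hg10, hBre]
  obtain ⟨w, hwn, hwi, hwB⟩ := qaux_rotate_jk B' hB're
  have hw0 : w ≠ 0 := by
    intro h; rw [h, norm_zero] at hwn; norm_num at hwn
  set b1 := B'.imI with hb1
  set r := Real.sqrt (B'.imJ ^ 2 + B'.imK ^ 2) with hrdef
  have hsum : b1 ^ 2 + (B'.imJ ^ 2 + B'.imK ^ 2) = 1 := by
    have := qaux_normSq_one hB'n
    rw [normSq_def'] at this
    rw [hB're] at this
    linarith [this]
  have hb1le : b1 ^ 2 ≤ 1 := by nlinarith [sq_nonneg B'.imJ, sq_nonneg B'.imK]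
  have hb1m : -1 ≤ b1 ∧ b1 ≤ 1 := abs_le.mp (abs_le_one_iff_mul_self_le_one.mpr (by nlinarith))
  set γ := Real.arccos b1 with hγ
  have hcosγ : Real.cos γ = b1 := Real.cos_arccos hb1m.1 hb1m.2
  have hsinγ : Real.sin γ = r := by
    rw [hγ, Real.sin_arccos, hrdef]
    congr 1
    linarith [hsum]
  refine ⟨w * g1, γ, ?_, ⟨Real.arccos_nonneg _, Real.arccos_le_pi _⟩, ?_, ?_, ?_⟩
  · rw [norm_mul, hwn, hg1n]; norm_num
  · rw [mul_inv_rev, show w * g1 * A * (g1⁻¹ * w⁻¹) = w * (g1 * A * g1⁻¹) * w⁻¹ by simp only [mul_assoc],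
      hg1A]
    exact qaux_conj_eq hw0 hwi
  · rw [mul_inv_rev, show w * g1 * B * (g1⁻¹ * w⁻¹) = w * (g1 * B * g1⁻¹) * w⁻¹ by simp only [mul_assoc],
      ← hB', hwB, qaux_expQ_qk_mul_qi, hcosγ, hsinγ]
  · intro g' γ' hg'n hγ'm hA' hB'eq
    have hgA : (w * g1) * A * (w * g1)⁻¹ = qi := by
      rw [mul_inv_rev, show w * g1 * A * (g1⁻¹ * w⁻¹) = w * (g1 * A * g1⁻¹) * w⁻¹ by simp only [mul_assoc],
        hg1A]
      exact qaux_conj_eq hw0 hwi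
    have hgB : (w * g1) * B * (w * g1)⁻¹ = expQ γ qk * qi := by
      rw [mul_inv_rev, show w * g1 * B * (g1⁻¹ * w⁻¹) = w * (g1 * B * g1⁻¹) * w⁻¹ by simp only [mul_assoc],
        ← hB', hwB, qaux_expQ_qk_mul_qi, hcosγ, hsinγ]
    have hwg : ‖w * g1‖ = 1 := by rw [norm_mul, hwn, hg1n]; norm_num
    have h1 := qaux_cos_det hg'n hA' hB'eq
    have h2 := qaux_cos_det hwg hgA hgB
    exact Real.injOn_cos hγ'm ⟨Real.arccos_nonneg _, Real.arccos_le_pi _⟩ (by rw [h1, h2])
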